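/- Let ρ be a density matrix and P_𝒜 an orthogonal projector with tr(P_𝒜 ρ) > 0, and set ρ_𝒜 = P_𝒜 ρ P_𝒜 / tr(P_𝒜 ρ). Then ‖ρ_𝒜 − ρ‖₁ ≥ 2 (1 − tr(P_𝒜 ρ)). -/

import Mathlib

open Matrix
open scoped ComplexOrder

/-- The trace norm (Schatten 1-norm) of a complex square matrix: `‖A‖₁ = tr √(AᴴA)`. -/
noncomputable def traceNorm {m : Type*} [Fintype m] [DecidableEq m] (A : Matrix m m ℂ) : ℝ :=
  (((Matrix.posSemidef_conjTranspose_mul_self A).1.eigenvectorUnitary : Matrix m m ℂ) *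
    diagonal ((fun x : ℝ => (x : ℂ)) ∘ Real.sqrt ∘ (Matrix.posSemidef_conjTranspose_mul_self A).1.eigenvalues) *
    (star (Matrix.posSemidef_conjTranspose_mul_self A).1.eigenvectorUnitary : Matrix m m ℂ)).trace.re

section Aux

variable {n : Type*} [Fintype n] [DecidableEq n]

lemma traceNorm_eq_sum_abs_eigenvalues (Δ : Matrix n n ℂ) (hΔ : Δ.IsHermitian) :
    traceNorm Δ = ∑ i, |hΔ.eigenvalues i| := by
  classical
  have hH := (Matrix.posSemidef_conjTranspose_mul_self Δ).1
  have h1 : traceNorm Δ = (hH.cfc Real.sqrt).trace.re := by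
    rw [traceNorm, Matrix.IsHermitian.cfc, Unitary.conjStarAlgAut_apply]; rfl
  have h2 : Δᴴ * Δ = cfc (fun x : ℝ => x ^ 2) Δ := by
    rw [cfc_pow (fun x => x) 2 Δ (ha := hΔ.isSelfAdjoint), cfc_id' ℝ Δ, hΔ.eq, pow_two]
  rw [h1, ← hH.cfc_eq, h2, ← cfc_comp Real.sqrt (fun x : ℝ => x ^ 2) Δ (ha := hΔ.isSelfAdjoint)]
  have h3 : (Real.sqrt ∘ fun x : ℝ => x ^ 2) = fun x => |x| :=
    funext fun x => Real.sqrt_sq_eq_abs x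
  rw [h3, hΔ.cfc_eq, Matrix.IsHermitian.cfc]
  simp only [Unitary.conjStarAlgAut_apply, Unitary.coe_star]
  rw [Matrix.trace_mul_cycle, Unitary.coe_star_mul_self, Matrix.one_mul, Matrix.trace_diagonal]
  simp [Complex.re_sum]

lemma re_trace_unitary_mul_diagonal_le (N : Matrix n n ℂ) (hN : N ∈ Matrix.unitaryGroup n ℂ)
    (c : n → ℂ) :
    (Matrix.trace (N * diagonal c)).re ≤ ∑ i, ‖c i‖ := by
  have habs : ∀ i, ‖N i i‖ ≤ 1 := by
    intro i
    have h1 : (star N * N) i i = 1 := by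
      rw [Matrix.mem_unitaryGroup_iff'.mp hN, Matrix.one_apply_eq]
    have h2 : ∑ j, Complex.normSq (N j i) = 1 := by
      have h1' := congrArg Complex.re h1
      rw [Matrix.mul_apply] at h1'
      simpa [Matrix.star_apply, ← Complex.normSq_eq_conj_mul_self, Complex.re_sum] using h1'
    have h3 : Complex.normSq (N i i) ≤ 1 := by
      rw [← h2]
      exact Finset.single_le_sum (fun j _ => Complex.normSq_nonneg (N j i)) (Finset.mem_univ i)
    rw [← Complex.sq_norm] at h3
    nlinarith [norm_nonneg (N i i)]
  have htr : Matrix.trace (N * diagonal c) = ∑ i, N i i * c i := by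
    simp [Matrix.trace, Matrix.diag, Matrix.mul_diagonal]
  rw [htr, Complex.re_sum]
  apply Finset.sum_le_sum
  intro i _
  calc ((N i i) * (c i)).re ≤ ‖(N i i) * (c i)‖ := Complex.re_le_norm _
    _ = ‖N i i‖ * ‖c i‖ := norm_mul _ _
    _ ≤ 1 * ‖c i‖ :=
        mul_le_mul_of_nonneg_right (habs i) (norm_nonneg _)
    _ = ‖c i‖ := one_mul _

end Aux

/-- For a density matrix `ρ` and an orthogonal projector `P_𝒜` with `tr(P_𝒜 ρ) > 0`, the
projected state `ρ_𝒜 = P_𝒜 ρ P_𝒜 / tr(P_𝒜 ρ)` satisfies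
`‖ρ_𝒜 − ρ‖₁ ≥ 2 (1 − tr(P_𝒜 ρ))`. -/
theorem traceNorm_projected_state_sub_ge {d : ℕ}
    (ρ PA : Matrix (Fin d) (Fin d) ℂ)
    (hρ : ρ.PosSemidef) (hρtr : ρ.trace = 1)
    (hPA_herm : PAᴴ = PA) (hPA_idem : PA * PA = PA)
    (htrA : 0 < (PA * ρ).trace.re) :
    2 * (1 - (PA * ρ).trace.re)
      ≤ traceNorm (((PA * ρ).trace.re)⁻¹ • (PA * ρ * PA) - ρ) := by
  classical
  set p : ℝ := (PA * ρ).trace.re with hpdef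
  have hp0 : p ≠ 0 := ne_of_gt htrA
  -- PA ρ PA is PSD
  have hσpsd : (PA * ρ * PA).PosSemidef := by
    have h := hρ.mul_mul_conjTranspose_same PA
    rwa [hPA_herm] at h
  have htr3 : (PA * ρ * PA).trace = (PA * ρ).trace := by
    rw [Matrix.trace_mul_cycle, hPA_idem]
  have hreal : (PA * ρ).trace = (p : ℂ) := by
    have hstar : star ((PA * ρ * PA).trace) = (PA * ρ * PA).trace := by
      rw [← Matrix.trace_conjTranspose, hσpsd.1]
    have hconj : (starRingEnd ℂ) ((PA * ρ).trace) = (PA * ρ).trace := by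
      rw [← htr3]; exact hstar
    exact (Complex.conj_eq_iff_re.mp hconj).symm
  set Δ : Matrix (Fin d) (Fin d) ℂ := p⁻¹ • (PA * ρ * PA) - ρ with hΔdef
  have hΔherm : Δ.IsHermitian := by
    have h1 : (PA * ρ * PA)ᴴ = PA * ρ * PA := hσpsd.1
    show Δᴴ = Δ
    rw [hΔdef, Matrix.conjTranspose_sub, Matrix.conjTranspose_smul, h1, hρ.1.eq, star_trivial]
  set M : Matrix (Fin d) (Fin d) ℂ := PA + PA - 1 with hMdef
  have hMstar : star M = M := by
    show Mᴴ = M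
    rw [hMdef, Matrix.conjTranspose_sub, Matrix.conjTranspose_add, hPA_herm,
      Matrix.conjTranspose_one]
  have hMM : M * M = 1 := by
    rw [hMdef]
    simp only [sub_mul, mul_sub, add_mul, mul_add, hPA_idem, Matrix.one_mul, Matrix.mul_one]
    abel
  have hMmem : M ∈ Matrix.unitaryGroup (Fin d) ℂ :=
    Matrix.mem_unitaryGroup_iff.mpr (by rw [hMstar, hMM])
  -- trace computations
  have hPσ : PA * (PA * ρ * PA) = PA * ρ * PA := by
    rw [Matrix.mul_assoc PA ρ PA, ← Matrix.mul_assoc PA PA, hPA_idem]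
  have htrσ : (PA * ρ * PA).trace = (p : ℂ) := by rw [htr3, hreal]
  have htrPAΔ : (PA * Δ).trace = 1 - (p : ℂ) := by
    rw [hΔdef, Matrix.mul_sub, Matrix.mul_smul, Matrix.trace_sub, Matrix.trace_smul, hPσ,
      htrσ, hreal]
    rw [Complex.real_smul, Complex.ofReal_inv, inv_mul_cancel₀ (by exact_mod_cast hp0)]
  have htrΔ : Δ.trace = 0 := by
    rw [hΔdef, Matrix.trace_sub, Matrix.trace_smul, htrσ, hρtr,
      Complex.real_smul, Complex.ofReal_inv, inv_mul_cancel₀ (by exact_mod_cast hp0), sub_self]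
  have htrMΔ : (M * Δ).trace = ((2 * (1 - p) : ℝ) : ℂ) := by
    rw [hMdef, Matrix.sub_mul, Matrix.add_mul, Matrix.one_mul, Matrix.trace_sub,
      Matrix.trace_add, htrPAΔ, htrΔ]
    push_cast
    ring
  -- spectral decomposition of Δ
  set U : Matrix (Fin d) (Fin d) ℂ := (hΔherm.eigenvectorUnitary : Matrix (Fin d) (Fin d) ℂ)
    with hUdef
  have hNmem : star U * M * U ∈ Matrix.unitaryGroup (Fin d) ℂ :=
    mul_mem (mul_mem (Unitary.star_mem hΔherm.eigenvectorUnitary.2) hMmem)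
      hΔherm.eigenvectorUnitary.2
  have htrswap : (M * Δ).trace
      = ((star U * M * U) * diagonal (RCLike.ofReal ∘ hΔherm.eigenvalues)).trace := by
    conv_lhs => rw [hΔherm.spectral_theorem, Unitary.conjStarAlgAut_apply]
    rw [← hUdef, ← Matrix.mul_assoc, ← Matrix.mul_assoc, Matrix.trace_mul_cycle,
      ← Matrix.mul_assoc]
  have hbound := re_trace_unitary_mul_diagonal_le (star U * M * U) hNmem
    (RCLike.ofReal ∘ hΔherm.eigenvalues)
  have habs_eq : ∑ i, ‖((RCLike.ofReal ∘ hΔherm.eigenvalues) i : ℂ)‖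
      = ∑ i, |hΔherm.eigenvalues i| := by
    apply Finset.sum_congr rfl
    intro i _
    simp [Function.comp, Complex.norm_real]
  calc 2 * (1 - p) = ((M * Δ).trace).re := by rw [htrMΔ, Complex.ofReal_re]
    _ = ((star U * M * U) * diagonal (RCLike.ofReal ∘ hΔherm.eigenvalues)).trace.re := by
        rw [htrswap]
    _ ≤ ∑ i, ‖((RCLike.ofReal ∘ hΔherm.eigenvalues) i : ℂ)‖ := hbound
    _ = ∑ i, |hΔherm.eigenvalues i| := habs_eq
    _ = traceNorm Δ := (traceNorm_eq_sum_abs_eigenvalues Δ hΔherm).symm
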